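/- Let d ≥ 1 and e ≥ 1 be integers, let α be a finite type with exactly d·e elements, and let σ be a permutation of α such that every point of α has minimal period exactly e under σ (so σ is a product of exactly d disjoint cycles, each of length e). Then the centralizer of σ in the permutation group of α is isomorphic to the wreath product (ℤ/eℤ) ≀ Σ_d, i.e., to the semidirect product ((ℤ/eℤ)^d) ⋊ Σ_d, where the symmetric group Σ_d on d letters acts on (ℤ/eℤ)^d by permuting the coordinates. -/

import Mathlib

noncomputable section

/-- The coordinate-permuting automorphism of `Fin d → M` attached to a permutation. -/
def permMulAut (d : ℕ) (M : Type) [Group M] (rho : Equiv.Perm (Fin d)) :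
    MulAut (Fin d → M) :=
  { Equiv.arrowCongr rho (Equiv.refl M) with
    map_mul' := by intro f g; rfl }

/-- `Σ_d` acting on `(Fin d → M)` by permuting coordinates. -/
def permHom (d : ℕ) (M : Type) [Group M] : Equiv.Perm (Fin d) →* MulAut (Fin d → M) where
  toFun := permMulAut d M
  map_one' := by ext f x; rfl
  map_mul' := by intro a b; ext f x; rfl

/-- The wreath product `M ≀ Σ_d = M^d ⋊ Σ_d`. -/
abbrev WreathProduct (M : Type) [Group M] (d : ℕ) : Type :=
  SemidirectProduct (Fin d → M) (Equiv.Perm (Fin d)) (permHom d M)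

/-! ### Auxiliary material -/

/-- The permutation `(i,k) ↦ (ρ i, k + v (ρ i))` of `Fin d × ZMod e`. -/
def phiPerm (d e : ℕ) (v : Fin d → Multiplicative (ZMod e)) (ρ : Equiv.Perm (Fin d)) :
    Equiv.Perm (Fin d × ZMod e) :=
  Equiv.prodShear ρ (fun i => Equiv.addRight ((v (ρ i)).toAdd))

@[simp] lemma phiPerm_apply (d e : ℕ) (v : Fin d → Multiplicative (ZMod e))
    (ρ : Equiv.Perm (Fin d)) (p : Fin d × ZMod e) :
    phiPerm d e v ρ p = (ρ p.1, p.2 + (v (ρ p.1)).toAdd) := rfl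

/-- `Perm` congruence as a `MulEquiv`. -/
def permMulCongr {α β : Type*} (f : α ≃ β) : Equiv.Perm α ≃* Equiv.Perm β :=
  { Equiv.permCongr f with
    map_mul' := fun a b => by
      ext x
      simp [Equiv.permCongr_apply] }

lemma permMulCongr_apply {α β : Type*} (f : α ≃ β) (σ : Equiv.Perm α) (x : β) :
    permMulCongr f σ x = f (σ (f.symm x)) := rfl

/-- The "standard model" permutation `(i,k) ↦ (i, k+1)`. -/
def tauPerm (d e : ℕ) : Equiv.Perm (Fin d × ZMod e) :=
  Equiv.prodCongr (Equiv.refl (Fin d)) (Equiv.addRight (1 : ZMod e))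

@[simp] lemma tauPerm_apply (d e : ℕ) (p : Fin d × ZMod e) :
    tauPerm d e p = (p.1, p.2 + 1) := rfl

lemma tauPerm_pow_apply (d e : ℕ) (m : ℕ) (p : Fin d × ZMod e) :
    (tauPerm d e ^ m) p = (p.1, p.2 + m) := by
  induction m with
  | zero => simp
  | succ n ih =>
    rw [pow_succ', Equiv.Perm.mul_apply, ih]
    simp [add_assoc]

/-- The monoid hom from the wreath product into `Perm (Fin d × ZMod e)`. -/
def Phi (d e : ℕ) : WreathProduct (Multiplicative (ZMod e)) d →* Equiv.Perm (Fin d × ZMod e) where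
  toFun g := phiPerm d e g.left g.right
  map_one' := by
    ext p
    · simp [phiPerm]
    · simp [phiPerm]
  map_mul' a b := by
    ext p
    · simp [phiPerm, Equiv.Perm.mul_apply]
    · have hp : ∀ x, (permHom d (Multiplicative (ZMod e)) a.right b.left) x =
          b.left (a.right.symm x) := fun _ => rfl
      simp [phiPerm, Equiv.Perm.mul_apply, hp]
      ring

@[simp] lemma Phi_apply (d e : ℕ) (g : WreathProduct (Multiplicative (ZMod e)) d) :
    Phi d e g = phiPerm d e g.left g.right := rfl

lemma Phi_injective (d e : ℕ) : Function.Injective (Phi d e) := by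
  rw [injective_iff_map_eq_one]
  intro g hg
  have h : ∀ p : Fin d × ZMod e, phiPerm d e g.left g.right p = p := fun p => by
    have := Equiv.ext_iff.mp hg p
    simpa using this
  have hr : ∀ i, g.right i = i := fun i => congrArg Prod.fst (h (i, 0))
  refine SemidirectProduct.ext (funext fun i => ?_) (Equiv.ext hr)
  have h2 := congrArg Prod.snd (h (i, 0))
  simp only [phiPerm_apply, zero_add] at h2
  rw [hr i] at h2
  -- h2 : (g.left i).toAdd = 0
  simpa using h2

lemma Phi_mem_centralizer (d e : ℕ) (g : WreathProduct (Multiplicative (ZMod e)) d) :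
    Phi d e g ∈ Subgroup.centralizer {tauPerm d e} := by
  rw [Subgroup.mem_centralizer_singleton_iff]
  refine Equiv.ext fun p => ?_
  simp only [Equiv.Perm.mul_apply, Phi_apply, phiPerm_apply, tauPerm_apply]
  exact Prod.ext rfl (by ring)

lemma Phi_range (d e : ℕ) [NeZero e] :
    (Phi d e).range = Subgroup.centralizer {tauPerm d e} := by
  apply le_antisymm
  · rintro _ ⟨g, rfl⟩
    exact Phi_mem_centralizer d e g
  · intro π hπ
    rw [Subgroup.mem_centralizer_singleton_iff] at hπ
    have hc : Commute π (tauPerm d e) := hπ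
    have hcomm : ∀ (m : ℕ) (p : Fin d × ZMod e),
        π ((tauPerm d e ^ m) p) = (tauPerm d e ^ m) (π p) := by
      intro m p
      have h := hc.pow_right m
      calc π ((tauPerm d e ^ m) p) = (π * tauPerm d e ^ m) p := rfl
        _ = (tauPerm d e ^ m * π) p := by rw [h]
        _ = (tauPerm d e ^ m) (π p) := rfl
    set ρf : Fin d → Fin d := fun i => (π (i, 0)).1 with hρf
    set vf : Fin d → ZMod e := fun i => (π (i, 0)).2 with hvf
    have key : ∀ (i : Fin d) (k : ZMod e), π (i, k) = (ρf i, vf i + k) := by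
      intro i k
      have h1 : (tauPerm d e ^ k.val) ((i, 0) : Fin d × ZMod e) = (i, k) := by
        rw [tauPerm_pow_apply]
        exact Prod.ext rfl (by rw [zero_add]; exact ZMod.natCast_rightInverse k)
      calc π (i, k) = π ((tauPerm d e ^ k.val) (i, 0)) := by rw [h1]
        _ = (tauPerm d e ^ k.val) (π (i, 0)) := hcomm _ _
        _ = (ρf i, vf i + k) := by
            rw [tauPerm_pow_apply]
            exact Prod.ext rfl (by rw [ZMod.natCast_rightInverse k])
    have hinj : Function.Injective ρf := by
      intro i j hij
      have h1 : π (i, vf j - vf i) = π (j, 0) := by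
        rw [key, key]
        exact Prod.ext hij (by ring)
      have := π.injective h1
      exact congrArg Prod.fst this
    let ρ : Equiv.Perm (Fin d) := Equiv.ofBijective ρf (Finite.injective_iff_bijective.mp hinj)
    refine ⟨⟨fun j => Multiplicative.ofAdd (vf (ρ.symm j)), ρ⟩, ?_⟩
    refine Equiv.ext fun p => ?_
    have hk := key p.1 p.2
    simp only [Phi_apply, phiPerm_apply]
    rw [show π p = π (p.1, p.2) from rfl, hk]
    have hρ : ρ p.1 = ρf p.1 := rfl
    refine Prod.ext hρ ?_
    simp only [hρ.symm, Equiv.symm_apply_apply, toAdd_ofAdd]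
    ring

lemma map_centralizer_singleton {G H : Type*} [Group G] [Group H] (P : G ≃* H) (g : G) :
    Subgroup.map (P : G →* H) (Subgroup.centralizer {g}) = Subgroup.centralizer {P g} := by
  ext x
  simp only [Subgroup.mem_map, Subgroup.mem_centralizer_singleton_iff]
  constructor
  · rintro ⟨y, hy, rfl⟩
    simp only [MonoidHom.coe_coe, ← map_mul, hy]
  · intro hx
    refine ⟨P.symm x, P.injective ?_, by simp⟩
    simp only [map_mul, MulEquiv.apply_symm_apply, hx]

theorem centralizer_of_isoTypic_perm (d e : ℕ) (hd : 1 ≤ d) (he : 1 ≤ e)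
    (α : Type) [Fintype α] (hcard : Fintype.card α = d * e)
    (sigma : Equiv.Perm α)
    (hper : ∀ x : α, Function.minimalPeriod (⇑sigma) x = e) :
    Nonempty
      (Subgroup.centralizer ({sigma} : Set (Equiv.Perm α)) ≃*
        WreathProduct (Multiplicative (ZMod e)) d) := by
  classical
  haveI : NeZero e := ⟨by omega⟩
  have heZ : ((e : ℤ)) ≠ 0 := by exact_mod_cast (NeZero.ne e)
  have hσe : sigma ^ e = 1 := by
    ext x
    have h := Function.iterate_minimalPeriod (f := ⇑sigma) (x := x)
    rw [hper x] at h
    exact h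
  -- reduction of integer powers
  have hzred : ∀ (n : ℤ) (x : α), (sigma ^ n) x = (sigma ^ (n % (e : ℤ)).toNat) x := by
    intro n x
    have hq : sigma ^ ((e : ℤ) * (n / e) + n % e) = sigma ^ (n % (e : ℤ)) := by
      rw [zpow_add, zpow_mul, zpow_natCast, hσe, one_zpow, one_mul]
    have h2 : (((n % (e : ℤ)).toNat : ℤ)) = n % (e : ℤ) :=
      Int.toNat_of_nonneg (Int.emod_nonneg n heZ)
    calc (sigma ^ n) x = (sigma ^ ((e : ℤ) * (n / e) + n % e)) x := by
          rw [Int.mul_ediv_add_emod]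
      _ = (sigma ^ (n % (e : ℤ))) x := by rw [hq]
      _ = (sigma ^ ((n % (e : ℤ)).toNat : ℤ)) x := by rw [h2]
      _ = (sigma ^ (n % (e : ℤ)).toNat) x := by rw [zpow_natCast]
  -- the orbit setoid
  let s : Setoid α := ⟨fun x y => ∃ n : ℤ, (sigma ^ n) x = y, by
    constructor
    · exact fun x => ⟨0, rfl⟩
    · rintro x y ⟨n, hn⟩
      refine ⟨-n, ?_⟩
      rw [← hn, ← Equiv.Perm.mul_apply, ← zpow_add, neg_add_cancel, zpow_zero,
        Equiv.Perm.one_apply]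
    · rintro x y z ⟨n, hn⟩ ⟨m, hm⟩
      refine ⟨m + n, ?_⟩
      rw [← hm, ← hn, ← Equiv.Perm.mul_apply, ← zpow_add]⟩
  let Q := Quotient s
  haveI : Fintype Q := Fintype.ofFinite Q
  -- the equivalence Q × ZMod e ≃ α
  let Gfun : Q × ZMod e → α := fun p => (sigma ^ p.2.val) p.1.out
  have hGinj : Function.Injective Gfun := by
    rintro ⟨q1, k1⟩ ⟨q2, k2⟩ hG
    simp only [Gfun] at hG
    have hq : q1 = q2 := by
      have h1 : (sigma ^ (-(k2.val : ℤ) + (k1.val : ℤ))) q1.out = q2.out := by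
        rw [zpow_add, Equiv.Perm.mul_apply, zpow_natCast, hG, ← Equiv.Perm.mul_apply,
          ← zpow_natCast sigma k2.val, ← zpow_add, neg_add_cancel, zpow_zero,
          Equiv.Perm.one_apply]
      rw [← Quotient.out_eq q1, ← Quotient.out_eq q2]
      exact Quotient.sound ⟨_, h1⟩
    subst hq
    have hk : k1.val = k2.val := by
      refine Function.iterate_injOn_Iio_minimalPeriod (f := ⇑sigma) (x := q1.out) ?_ ?_ ?_
      · simp only [Set.mem_Iio, hper]; exact ZMod.val_lt k1
      · simp only [Set.mem_Iio, hper]; exact ZMod.val_lt k2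
      · simpa only [← Equiv.Perm.coe_pow] using hG
    rw [ZMod.val_injective e hk]
  have hGsurj : Function.Surjective Gfun := by
    intro y
    obtain ⟨n, hn⟩ : ∃ n : ℤ, (sigma ^ n) (Quotient.mk s y).out = y :=
      Quotient.exact (Quotient.out_eq (Quotient.mk s y))
    have h0 : (0 : ℤ) ≤ n % e := Int.emod_nonneg n heZ
    have h1 : n % (e : ℤ) < e := Int.emod_lt_of_pos n (by exact_mod_cast he)
    have hlt : (n % (e : ℤ)).toNat < e := by omega
    refine ⟨(Quotient.mk s y, (((n % (e : ℤ)).toNat : ℕ) : ZMod e)), ?_⟩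
    show (sigma ^ ((((n % (e : ℤ)).toNat : ℕ) : ZMod e)).val) _ = y
    rw [ZMod.val_cast_of_lt hlt, ← hzred n, hn]
  let Geq : Q × ZMod e ≃ α := Equiv.ofBijective Gfun ⟨hGinj, hGsurj⟩
  have hQd : Fintype.card Q = d := by
    have hc := Fintype.card_congr Geq
    rw [Fintype.card_prod, ZMod.card, hcard] at hc
    exact Nat.eq_of_mul_eq_mul_right (by omega) hc
  let qe : Fin d ≃ Q := (Fintype.equivFinOfCardEq hQd).symm
  let f : Fin d × ZMod e ≃ α := (Equiv.prodCongr qe (Equiv.refl (ZMod e))).trans Geq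
  have hf : ∀ p : Fin d × ZMod e, f p = (sigma ^ p.2.val) (qe p.1).out := fun p => rfl
  -- equivariance
  have hequiv : ∀ p : Fin d × ZMod e, sigma (f p) = f (p.1, p.2 + 1) := by
    rintro ⟨i, k⟩
    rw [hf, hf]
    show sigma ((sigma ^ k.val) (qe i).out) = (sigma ^ (k + 1).val) (qe i).out
    have hv : (k + 1 : ZMod e).val = (k.val + 1) % e := by
      rw [ZMod.val_add, ZMod.val_one_eq_one_mod]
      conv_rhs => rw [Nat.add_mod]
      rw [Nat.mod_eq_of_lt (ZMod.val_lt k)]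
    rw [hv, ← pow_eq_pow_mod _ hσe, pow_succ', Equiv.Perm.mul_apply]
  let P : Equiv.Perm α ≃* Equiv.Perm (Fin d × ZMod e) := permMulCongr f.symm
  have hPσ : P sigma = tauPerm d e := by
    refine Equiv.ext fun p => ?_
    have h1 : (P sigma) p = f.symm (sigma (f p)) := by
      rw [permMulCongr_apply, Equiv.symm_symm]
    rw [h1, hequiv, Equiv.symm_apply_apply, tauPerm_apply]
  have e1 : Subgroup.centralizer ({sigma} : Set (Equiv.Perm α)) ≃*
      Subgroup.centralizer ({tauPerm d e} : Set (Equiv.Perm (Fin d × ZMod e))) :=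
    (P.subgroupMap _).trans (MulEquiv.subgroupCongr
      (by rw [map_centralizer_singleton P sigma, hPσ]))
  have e2 : WreathProduct (Multiplicative (ZMod e)) d ≃*
      Subgroup.centralizer ({tauPerm d e} : Set (Equiv.Perm (Fin d × ZMod e))) :=
    (MonoidHom.ofInjective (Phi_injective d e)).trans
      (MulEquiv.subgroupCongr (Phi_range d e))
  exact ⟨e1.trans e2.symm⟩

end
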